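/- Let G be a finite simple graph and let Ĝ be the double subdivision of G. Then every path in Ĝ between two distinct vertices of degree 3 in Ĝ contains an edge of the form {x_{v,u}, x_{u,v}} for some edge {v,u} ∈ E(G). -/

import Mathlib

/-- The double subdivision `Ĝ` of a finite simple graph `G`: every edge `{v,u}` of `G`
is subdivided twice, introducing the new vertices `x_{v,u} = Sum.inr (v, u)` and
`x_{u,v} = Sum.inr (u, v)`, and the edges `{v, x_{v,u}}`, `{u, x_{u,v}}` and
`{x_{v,u}, x_{u,v}}`. -/
def doubleSubdivision {V : Type*} (G : SimpleGraph V) : SimpleGraph (V ⊕ V × V) :=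
  SimpleGraph.fromRel fun a b =>
    (∃ v u, G.Adj v u ∧ a = Sum.inl v ∧ b = Sum.inr (v, u)) ∨
    (∃ v u, G.Adj v u ∧ a = Sum.inr (v, u) ∧ b = Sum.inr (u, v))

private def dsLabel {V : Type*} : V ⊕ V × V → V := Sum.elim id Prod.fst

private lemma ds_adj_cases {V : Type*} (G : SimpleGraph V) {x y : V ⊕ V × V}
    (h : (doubleSubdivision G).Adj x y) :
    dsLabel x = dsLabel y ∨
      ∃ v u, G.Adj v u ∧ x = Sum.inr (v, u) ∧ y = Sum.inr (u, v) := by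
  obtain ⟨-, h | h⟩ := h
  · rcases h with ⟨v, u, hvu, rfl, rfl⟩ | ⟨v, u, hvu, rfl, rfl⟩
    · left; rfl
    · exact Or.inr ⟨v, u, hvu, rfl, rfl⟩
  · rcases h with ⟨v, u, hvu, rfl, rfl⟩ | ⟨v, u, hvu, rfl, rfl⟩
    · left; rfl
    · exact Or.inr ⟨u, v, hvu.symm, rfl, rfl⟩

private lemma ds_key {V : Type*} (G : SimpleGraph V) {a b : V ⊕ V × V}
    (p : (doubleSubdivision G).Walk a b) (h : dsLabel a ≠ dsLabel b) :
    ∃ v u, G.Adj v u ∧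
      s((Sum.inr (v, u) : V ⊕ V × V), (Sum.inr (u, v) : V ⊕ V × V)) ∈ p.edges := by
  induction p with
  | nil => exact absurd rfl h
  | cons hadj q ih =>
    rcases ds_adj_cases G hadj with heq | ⟨v, u, hvu, rfl, rfl⟩
    · obtain ⟨v, u, hvu, hmem⟩ := ih (heq ▸ h)
      exact ⟨v, u, hvu, List.mem_cons_of_mem _ hmem⟩
    · exact ⟨v, u, hvu, List.mem_cons_self⟩

private lemma ds_deg_inr {V : Type*} [Fintype V] (G : SimpleGraph V) (q : V × V) :
    Nat.card ((doubleSubdivision G).neighborSet (Sum.inr q)) ≤ 2 := by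
  have hsub : (doubleSubdivision G).neighborSet (Sum.inr q) ⊆
      {Sum.inl q.1, Sum.inr (q.2, q.1)} := by
    intro y hy
    obtain ⟨-, h | h⟩ := hy
    · rcases h with ⟨v, u, hvu, h1, rfl⟩ | ⟨v, u, hvu, h1, rfl⟩
      · exact absurd h1 (by simp)
      · obtain rfl : q = (v, u) := by simpa using h1
        simp
    · rcases h with ⟨v, u, hvu, rfl, h2⟩ | ⟨v, u, hvu, rfl, h2⟩
      · obtain rfl : q = (v, u) := by simpa using h2
        simp
      · obtain rfl : q = (u, v) := by simpa using h2
        simp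
  rw [Nat.card_coe_set_eq]
  calc ((doubleSubdivision G).neighborSet (Sum.inr q)).ncard
      ≤ ({Sum.inl q.1, Sum.inr (q.2, q.1)} : Set (V ⊕ V × V)).ncard :=
        Set.ncard_le_ncard hsub ((Set.finite_singleton _).insert _)
    _ ≤ 2 := by
        refine le_trans (Set.ncard_insert_le _ _) ?_
        simp

/-- Every path in `Ĝ` between two distinct vertices of degree `3` in
`Ĝ` contains an edge of the form `{x_{v,u}, x_{u,v}}` for some edge `{v,u} ∈ E(G)`. -/
theorem stmt_5 {V : Type*} [Fintype V] (G : SimpleGraph V)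
    (a b : V ⊕ V × V) (hab : a ≠ b)
    (ha : Nat.card ((doubleSubdivision G).neighborSet a) = 3)
    (hb : Nat.card ((doubleSubdivision G).neighborSet b) = 3)
    (p : (doubleSubdivision G).Walk a b) (hp : p.IsPath) :
    ∃ v u, G.Adj v u ∧
      s((Sum.inr (v, u) : V ⊕ V × V), (Sum.inr (u, v) : V ⊕ V × V)) ∈ p.edges := by
  obtain ⟨va, rfl⟩ : ∃ va, a = Sum.inl va := by
    cases a with
    | inl v => exact ⟨v, rfl⟩
    | inr q => exact absurd ha (by have := ds_deg_inr G q; omega)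
  obtain ⟨vb, rfl⟩ : ∃ vb, b = Sum.inl vb := by
    cases b with
    | inl v => exact ⟨v, rfl⟩
    | inr q => exact absurd hb (by have := ds_deg_inr G q; omega)
  exact ds_key G p (fun h => hab (by simpa [dsLabel] using h))
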